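/- arXiv:0803.1189 — 2 statements merged into one kernel-verified Lean document; each statement's English description precedes it below -/
import Mathlib

section
/- If xx is a 7/3-power-free binary square and xx = μ(y) for some binary word y, where μ is the Thue–Morse morphism, then |y| is even, and consequently y is itself a square. -/
def mu (w : List Bool) : List Bool := w.flatMap (fun b => if b then [true, false] else [false, true])

def isPow (beta : ℚ) (w : List Bool) : Prop :=
  ∃ (n : ℕ) (x x' : List Bool), x ≠ [] ∧ x' <+: x ∧
    w = (List.replicate n x).flatten ++ x' ∧ beta = n + (x'.length : ℚ) / (x.length : ℚ)

def PowFree (a : ℚ) (w : List Bool) : Prop :=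
  ∀ v, v <:+: w → ∀ beta : ℚ, a ≤ beta → ¬ isPow beta v

def OverlapFree (w : List Bool) : Prop :=
  ∀ u v : List Bool, u ≠ [] → ¬ (u ++ v ++ u ++ v ++ u) <:+: w

lemma mu_cons (b : Bool) (y : List Bool) : mu (b :: y) = b :: (!b) :: mu y := by
  cases b <;> simp [mu]

lemma mu_nil : mu [] = [] := rfl

lemma mu_length (y : List Bool) : (mu y).length = 2 * y.length := by
  induction y with
  | nil => rfl
  | cons b y ih => rw [mu_cons]; simp [ih]; omega

lemma mu_append (a b : List Bool) : mu (a ++ b) = mu a ++ mu b := by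
  simp [mu]

lemma mu_inj : ∀ a b : List Bool, mu a = mu b → a = b := by
  intro a
  induction a with
  | nil => intro b h; cases b with
    | nil => rfl
    | cons c cs => rw [mu_nil, mu_cons] at h; exact absurd h (by simp)
  | cons c cs ih =>
    intro b h
    cases b with
    | nil => rw [mu_nil, mu_cons] at h; exact absurd h (by simp)
    | cons d ds =>
      rw [mu_cons, mu_cons] at h
      injection h with h1 h'
      injection h' with _ h3
      rw [h1, ih ds h3]

lemma mu_block (y : List Bool) : ∀ i : ℕ, 2*i+1 < (mu y).length → (mu y)[2*i]! = !(mu y)[2*i+1]! := by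
  induction y with
  | nil => intro i h; simp [mu_nil] at h
  | cons b y ih =>
    intro i h
    rw [mu_cons] at *
    cases i with
    | zero => simp
    | succ i =>
      rw [show 2*(i+1) = 2*i+1+1 from by ring]
      simp only [List.getElem!_cons_succ]
      apply ih
      simp at h
      omega

theorem stmt3 (x y : List Bool) (h : PowFree (7/3) (x ++ x)) (he : x ++ x = mu y) :
    Even y.length ∧ ∃ z, y = z ++ z := by
  have hlen : x.length = y.length := by
    have := congrArg List.length he
    simp [mu_length] at this
    omega
  set n := x.length with hn
  set w := mu y with hw
  have hwx : w = x ++ x := he.symm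
  have hwlen : w.length = 2 * n := by rw [hwx]; simp; omega
  -- Q' : indices shift by n
  have Q : ∀ j, j < n → w[j]! = w[j+n]! := by
    intro j hj
    have h1 : w[j]! = x[j]! := by
      rw [hwx, getElem!_pos (x ++ x) j (by simp; omega), getElem!_pos x j hj,
        List.getElem_append_left]
    have h2 : w[j+n]! = x[j]! := by
      rw [hwx, getElem!_pos (x ++ x) (j + n) (by simp; omega), getElem!_pos x j hj]
      rw [List.getElem_append_right (by omega)]
      congr 1
      omega
    rw [h1, h2]
  -- block property on w
  have P : ∀ i : ℕ, 2*i+1 < 2*n → w[2*i]! = !w[2*i+1]! := by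
    intro i hi
    exact mu_block y i (by rw [← hw, hwlen]; omega)
  have heven : Even n := by
    by_contra hodd
    rw [Nat.not_even_iff_odd] at hodd
    obtain ⟨m, hm⟩ := hodd
    -- step lemma
    have S : ∀ j, j < n → w[j+1]! = !w[j]! := by
      intro j hj
      rcases Nat.even_or_odd j with ⟨i, hi⟩ | ⟨i, hi⟩
      · have := P i (by omega)
        rw [show j+1 = 2*i+1 by omega, show j = 2*i by omega, this, Bool.not_not]
      · -- j odd, so j+1 even, j+1 < n since n odd
        have hj1 : j + 1 < n := by omega
        have hq1 : w[j]! = w[j+n]! := Q j hj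
        have hq2 : w[j+1]! = w[j+1+n]! := Q (j+1) hj1
        have hpar : j + n = 2 * (i + m + 1) := by omega
        have := P (i+m+1) (by omega)
        rw [← hpar] at this
        rw [show j+n+1 = j+1+n by omega] at this
        rw [hq2, hq1, this, Bool.not_not]
    -- D : w[2*j+1]! = !w[0]!
    have D : ∀ j, 2*j+1 ≤ n → w[2*j+1]! = !w[0]! := by
      intro j
      induction j with
      | zero => intro hj; exact S 0 (by omega)
      | succ j ih =>
        intro hj
        have h1 : w[2*(j+1)+1]! = !w[2*j+1+1]! := by
          rw [show 2*(j+1)+1 = (2*j+1+1)+1 by ring]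
          exact S (2*j+1+1) (by omega)
        have h2 : w[2*j+1+1]! = !w[2*j+1]! := S (2*j+1) (by omega)
        rw [h1, h2, Bool.not_not, ih (by omega)]
    have hD := D m (by omega)
    have hQ0 : w[0]! = w[0+n]! := Q 0 (by omega)
    rw [show 0+n = 2*m+1 by omega] at hQ0
    rw [hD] at hQ0
    exact absurd hQ0 (by cases w[0]! <;> simp)
  constructor
  · rw [← hlen]; exact heven
  · obtain ⟨m, hm⟩ := heven
    have hy : y = y.take m ++ y.drop m := (List.take_append_drop m y).symm
    have hlt : (y.take m).length = m := by
      rw [List.length_take]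
      omega
    have hld : (y.drop m).length = m := by
      rw [List.length_drop]
      omega
    have hsplit : mu (y.take m) ++ mu (y.drop m) = x ++ x := by
      rw [← mu_append, ← hy, he]
    have hlen1 : (mu (y.take m)).length = x.length := by
      rw [mu_length, hlt]; omega
    have heq := List.append_inj hsplit hlen1
    have hzz : y.take m = y.drop m := mu_inj _ _ (heq.1.trans heq.2.symm)
    exact ⟨y.take m, by rw [← hzz] at hy; exact hy⟩
end

section
/- The word 01101001101100101100110100110110010110 is a square, contains no β-power for any rational β > 7/3, and is not a conjugate of any word in 𝒜 = ∪_{k≥0} μ^k({00, 11, 010010, 101101}). -/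
def SetA : Set (List Bool) :=
  {[false, false], [true, true],
   [false, true, false, false, true, false], [true, false, true, true, false, true]}

def InA (w : List Bool) : Prop := ∃ (k : ℕ) (s : List Bool), s ∈ SetA ∧ w = mu^[k] s

def ConjInA (w : List Bool) : Prop :=
  ∃ (k : ℕ) (s u v : List Bool), s ∈ SetA ∧ mu^[k] s = u ++ v ∧ w = v ++ u

def W : List Bool := [false, true, true, false, true, false, false, true, true, false, true, true, false, false, true, false, true, true, false, false, true, true, false, true, false, false, true, true, false, true, true, false, false, true, false, true, true, false]

set_option maxRecDepth 10000 in
lemma key : ∀ p < 17, 0 < p → ∀ i < 39, i + (7*p/3+1) ≤ 38 →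
    ∃ j < 38, j + p < 7*p/3+1 ∧ W.getD (i+j) false ≠ W.getD (i+j+p) false := by decide

lemma mu_len (w : List Bool) : (mu w).length = 2 * w.length := by
  induction w with
  | nil => simp [mu]
  | cons b w ih => cases b <;> simp [mu] at * <;> omega

lemma iter_len (k : ℕ) (w : List Bool) : (mu^[k] w).length = 2 ^ k * w.length := by
  induction k with
  | zero => simp
  | succ k ih => rw [Function.iterate_succ_apply', mu_len, ih, pow_succ]; ring

theorem stmt15 :
    (∃ x : List Bool, x ≠ [] ∧ W = x ++ x) ∧
    (∀ v, v <:+: W → ∀ beta : ℚ, 7/3 < beta → ¬ isPow beta v) ∧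
    ¬ ConjInA W := by
  refine ⟨⟨[false, true, true, false, true, false, false, true, true, false, true, true, false, false, true, false, true, true, false], by decide, by decide⟩, ?_, ?_⟩
  · rintro v hinf beta hbeta ⟨n, x, x', hx, hpre, hv, hbe⟩
    set p := x.length with hp_def
    set m := x'.length with hm_def
    have hp : 0 < p := List.length_pos_iff.mpr hx
    have hvlen : v.length = n * p + m := by
      rw [hv]; simp [List.length_flatten, List.map_replicate, List.sum_replicate, mul_comm]; rfl
    -- rational arithmetic
    have hpQ : (p : ℚ) ≠ 0 := by exact_mod_cast hp.ne'
    have hppos : (0:ℚ) < p := by exact_mod_cast hp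
    have hbQ : beta * p = n * p + m := by rw [hbe]; field_simp
    have h7Q : (7 : ℚ) * p < 3 * (n * p + m) := by
      nlinarith [mul_lt_mul_of_pos_right hbeta hppos]
    have h7 : 7 * p < 3 * v.length := by
      rw [hvlen]; exact_mod_cast h7Q
    -- periodicity of v with period p
    obtain ⟨t0, ht0⟩ := hpre
    have h1 : v <+: (List.replicate (n+1) x).flatten := by
      show v <+: (List.replicate (n+1) x).flatten
      rw [List.replicate_succ', List.flatten_append, hv]
      exact ⟨t0, by simp [← ht0]⟩
    have h2 : (List.replicate (n+1) x).flatten <+: x ++ v := by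
      show (List.replicate (n+1) x).flatten <+: x ++ v
      rw [List.replicate_succ, List.flatten_cons, hv]
      exact ⟨x', by simp⟩
    obtain ⟨tt, htt⟩ := h1.trans h2
    have hper : ∀ j, j + p < v.length → v.getD j false = v.getD (j + p) false := by
      intro j hj
      have e1 : v.getD (j + p) false = (v ++ tt).getD (j + p) false :=
        (List.getD_append _ _ _ _ hj).symm
      rw [e1, htt, List.getD_append_right x v false (j + p) (by omega)]
      congr 1; omega
    -- relate v to W
    obtain ⟨s, t, hst⟩ := hinf
    have hWlen : W.length = 38 := rfl
    have hv38 : v.length ≤ 38 := by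
      have := congrArg List.length hst
      simp [hWlen] at this; omega
    have hW : ∀ j, j < v.length → W.getD (s.length + j) false = v.getD j false := by
      intro j hj
      rw [← hst, List.append_assoc, List.getD_append_right s (v ++ t) false _ (by omega)]
      have : s.length + j - s.length = j := by omega
      rw [this, List.getD_append _ _ _ _ hj]
    have hL : 7 * p / 3 + 1 ≤ v.length := by
      have : 7 * p / 3 < v.length := (Nat.div_lt_iff_lt_mul (by norm_num)).mpr (by omega)
      omega
    have hslen : s.length + v.length ≤ 38 := by
      have := congrArg List.length hst
      simp [hWlen] at this; omega
    obtain ⟨j, hj38, hjp, hne⟩ := key p (by omega) hp s.length (by omega) (by omega)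
    apply hne
    rw [show s.length + j + p = s.length + (j + p) by omega,
      hW j (by omega), hW (j + p) (by omega)]
    exact hper j (by omega)
  · rintro ⟨k, s, u, v, hs, huv, hW⟩
    have h1 : 2 ^ k * s.length = 38 := by
      have h2 := iter_len k s
      rw [huv] at h2
      have h3 : W.length = 38 := rfl
      rw [hW] at h3
      simp at h2 h3
      omega
    have hslen : s.length = 2 ∨ s.length = 6 := by
      simp only [SetA, Set.mem_insert_iff, Set.mem_singleton_iff] at hs
      rcases hs with h | h | h | h <;> subst h <;> simp
    cases k with
    | zero => simp at h1; omega
    | succ k =>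
      rw [pow_succ] at h1
      rcases hslen with h | h <;> rw [h] at h1 <;> omega
end
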